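/- Let G be an undirected graph with three vertex layers A, B, C of n nodes each, all nodes in A and C having node-capacity 1 and all nodes in B having node-capacity 2n, with edges only between A and B and between B and C determined by boolean matrices P and Q (a∈A adjacent to b∈B iff P(a,b)=1; b∈B adjacent to c∈C iff Q(b,c)=1). Then for a∈A and c∈C: if the boolean matrix product entry R(a,c) = OR over b of (P(a,b) AND Q(b,c)) equals 1, then the node-capacitated maximum flow from a to c is at least 2n; and if R(a,c)=0, then this maximum flow is at most 2n-2. -/

import Mathlib

/-- The three-layer graph of the BMM reduction: layers `A`, `B`, `C` are the three
summands; `a ∈ A` is adjacent to `b ∈ B` iff `P a b = 1`, and `b ∈ B` is adjacent to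
`c ∈ C` iff `Q b c = 1`. -/
def bmmGraph (n : ℕ) (P Q : Fin n → Fin n → Bool) :
    SimpleGraph (Fin n ⊕ (Fin n ⊕ Fin n)) :=
  SimpleGraph.fromRel (fun x y =>
    match x, y with
    | Sum.inl a, Sum.inr (Sum.inl b) => P a b = true
    | Sum.inr (Sum.inl b), Sum.inr (Sum.inr c) => Q b c = true
    | _, _ => False)

/-- Node capacities: `1` on layers `A` and `C`, `2n` on the middle layer `B`. -/
def bmmCap (n : ℕ) : (Fin n ⊕ (Fin n ⊕ Fin n)) → ℕ
  | Sum.inl _ => 1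
  | Sum.inr (Sum.inl _) => 2 * n
  | Sum.inr (Sum.inr _) => 1

instance bmmLawfulBEqSum {α β : Type*} [BEq α] [BEq β] [LawfulBEq α] [LawfulBEq β] :
    LawfulBEq (α ⊕ β) where
  eq_of_beq {a b} h := by
    cases a <;> cases b
    · exact congrArg Sum.inl (eq_of_beq h)
    · exact Bool.noConfusion h
    · exact Bool.noConfusion h
    · exact congrArg Sum.inr (eq_of_beq h)
  rfl {a} := by
    cases a with
    | inl x => show (x == x) = true; exact beq_self_eq_true x
    | inr x => show (x == x) = true; exact beq_self_eq_true x

private lemma bmm_sum_helper {α V : Type*} (S : Finset V) (f : α → V → ℕ) :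
    ∀ L : List α, (∀ p ∈ L, ∃ v ∈ S, 1 ≤ f p v) →
      L.length ≤ ∑ v ∈ S, (L.map (fun p => f p v)).sum
  | [], _ => by simp
  | p :: L, h => by
    simp only [List.map_cons, List.sum_cons, List.length_cons, Finset.sum_add_distrib]
    have h1 : 1 ≤ ∑ v ∈ S, f p v := by
      obtain ⟨v, hv, h1⟩ := h p (by simp)
      exact le_trans h1 (Finset.single_le_sum (fun i _ => Nat.zero_le _) hv)
    have h2 := bmm_sum_helper S f L (fun q hq => h q (by simp [hq]))
    omega

private lemma bmm_key {n : ℕ} {P Q : Fin n → Fin n → Bool} {a c : Fin n}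
    (hR : ∀ b, ¬ (P a b = true ∧ Q b c = true))
    (p : (bmmGraph n P Q).Walk (Sum.inl a) (Sum.inr (Sum.inr c))) (hp : p.IsPath) :
    (∃ a', a' ≠ a ∧ Sum.inl a' ∈ p.support) ∨
    (∃ c', c' ≠ c ∧ (Sum.inr (Sum.inr c') : Fin n ⊕ (Fin n ⊕ Fin n)) ∈ p.support) := by
  cases p with
  | cons h q =>
    rename_i v2
    rcases v2 with a' | b | c'
    · simp [bmmGraph, SimpleGraph.fromRel_adj] at h
    · cases q with
      | cons h2 q2 =>
        rename_i v3
        have hP : P a b = true := by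
          simpa [bmmGraph, SimpleGraph.fromRel_adj] using h
        rcases v3 with a' | b' | c'
        · left
          refine ⟨a', ?_, by simp⟩
          intro hac
          subst hac
          have := hp.support_nodup
          simp at this
        · simp [bmmGraph, SimpleGraph.fromRel_adj] at h2
        · right
          refine ⟨c', ?_, by simp⟩
          intro hcc
          subst hcc
          have hQ : Q b c' = true := by
            simpa [bmmGraph, SimpleGraph.fromRel_adj] using h2
          exact hR b ⟨hP, hQ⟩
    · simp [bmmGraph, SimpleGraph.fromRel_adj] at h

/-- In the node-capacitated three-layer graph of the BMM reduction, for
`a ∈ A` and `c ∈ C`: if `R(a,c) = ⋁_b (P(a,b) ∧ Q(b,c)) = 1` then the maximum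
node-capacitated `a`-`c` flow is at least `2n`; if `R(a,c) = 0` it is at most `2n-2`.
A flow is modeled as a list of unit-flow simple paths such that the total flow through
each intermediate node is at most its capacity (source/sink capacities not enforced). -/
theorem stmt_10 (n : ℕ) (hn : 0 < n) (P Q : Fin n → Fin n → Bool) (a c : Fin n) :
    ((∃ b, P a b = true ∧ Q b c = true) →
      ∃ L : List ((bmmGraph n P Q).Walk (Sum.inl a) (Sum.inr (Sum.inr c))),
        (∀ p ∈ L, p.IsPath) ∧
        (∀ v, v ≠ Sum.inl a → v ≠ Sum.inr (Sum.inr c) →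
          (L.map (fun p => p.support.count v)).sum ≤ bmmCap n v) ∧
        2 * n ≤ L.length) ∧
    ((∀ b, ¬ (P a b = true ∧ Q b c = true)) →
      ∀ L : List ((bmmGraph n P Q).Walk (Sum.inl a) (Sum.inr (Sum.inr c))),
        (∀ p ∈ L, p.IsPath) →
        (∀ v, v ≠ Sum.inl a → v ≠ Sum.inr (Sum.inr c) →
          (L.map (fun p => p.support.count v)).sum ≤ bmmCap n v) →
        L.length ≤ 2 * n - 2) := by
  constructor
  · rintro ⟨b, hP, hQ⟩
    have h1 : (bmmGraph n P Q).Adj (Sum.inl a) (Sum.inr (Sum.inl b)) := by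
      simp [bmmGraph, SimpleGraph.fromRel_adj, hP]
    have h2 : (bmmGraph n P Q).Adj (Sum.inr (Sum.inl b)) (Sum.inr (Sum.inr c)) := by
      simp [bmmGraph, SimpleGraph.fromRel_adj, hQ]
    refine ⟨List.replicate (2*n)
      (SimpleGraph.Walk.cons h1 (SimpleGraph.Walk.cons h2 SimpleGraph.Walk.nil)), ?_, ?_, by simp⟩
    · intro p hp
      rw [List.eq_of_mem_replicate hp]
      simp [SimpleGraph.Walk.isPath_def]
    · intro v hva hvc
      simp only [List.map_replicate, List.sum_replicate, smul_eq_mul,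
        SimpleGraph.Walk.support_cons, SimpleGraph.Walk.support_nil]
      rcases v with a' | b' | c'
      · have ha : a' ≠ a := fun h => hva (by rw [h])
        rw [List.count_eq_zero_of_not_mem (by simp [ha])]
        simp [bmmCap]
      · by_cases hb : b' = b
        · subst hb
          simp [List.count_cons, bmmCap]
        · rw [List.count_eq_zero_of_not_mem (by simp [hb])]
          simp [bmmCap]
      · have hc : c' ≠ c := fun h => hvc (by rw [h])
        rw [List.count_eq_zero_of_not_mem (by simp [hc])]
        simp [bmmCap]
  · intro hR L hpath hcap
    classical
    set S : Finset (Fin n ⊕ (Fin n ⊕ Fin n)) :=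
      ((Finset.univ.erase a).image Sum.inl) ∪
      ((Finset.univ.erase c).image (fun x => Sum.inr (Sum.inr x))) with hS
    have hcard : S.card = 2 * n - 2 := by
      rw [hS, Finset.card_union_of_disjoint, Finset.card_image_of_injective _ Sum.inl_injective,
        Finset.card_image_of_injective, Finset.card_erase_of_mem (Finset.mem_univ _),
        Finset.card_erase_of_mem (Finset.mem_univ _), Finset.card_univ, Fintype.card_fin]
      · omega
      · intro x y hxy; simpa using hxy
      · simp [Finset.disjoint_left]
    have hmem : ∀ p ∈ L, ∃ v ∈ S, 1 ≤ p.support.count v := by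
      intro p hp
      rcases bmm_key hR p (hpath p hp) with ⟨a', ha', hmem⟩ | ⟨c', hc', hmem⟩
      · exact ⟨Sum.inl a', by simp [hS, ha'], List.count_pos_iff.mpr hmem⟩
      · exact ⟨Sum.inr (Sum.inr c'), by simp [hS, hc'], List.count_pos_iff.mpr hmem⟩
    calc L.length ≤ ∑ v ∈ S, (L.map (fun p => p.support.count v)).sum :=
          bmm_sum_helper S (fun p v => p.support.count v) L hmem
      _ ≤ ∑ _v ∈ S, 1 := by
          refine Finset.sum_le_sum fun v hv => ?_
          have hva : v ≠ Sum.inl a := by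
            rintro rfl; simp [hS] at hv
          have hvc : v ≠ Sum.inr (Sum.inr c) := by
            rintro rfl; simp [hS] at hv
          have := hcap v hva hvc
          have hcap1 : bmmCap n v = 1 := by
            rw [hS] at hv
            simp only [Finset.mem_union, Finset.mem_image] at hv
            rcases hv with ⟨x, _, rfl⟩ | ⟨x, _, rfl⟩ <;> rfl
          omega
      _ = 2 * n - 2 := by rw [Finset.sum_const, smul_eq_mul, mul_one, hcard]
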